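/- The function μ ↦ μ·κ̂(μ) is continuous and strictly concave on [1,∞), and is real-analytic on (1,∞). -/

import Mathlib

open scoped ContDiff

/-- The variational functional `f_μ(δ,ε)` (convention `0 log 0 = 0`, automatic
since `Real.log 0 = 0`). -/
noncomputable def fmu (μ : ℝ) (p : ℝ × ℝ) : ℝ :=
  -2 * p.1 * Real.log p.1 - 2 * p.2 * Real.log p.2
    - (1 - p.1 - p.2) * Real.log (1 - p.1 - p.2)
    - ((μ - 1) / 2 - p.1) * Real.log ((μ - 1) / 2 - p.1)
    - ((μ - 1) / 2 - p.2) * Real.log ((μ - 1) / 2 - p.2)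
    + (μ - 1) * Real.log ((μ - 1) / 2)

/-- The domain `D_μ` of `f_μ`. -/
def Dmu (μ : ℝ) : Set (ℝ × ℝ) :=
  {p | 0 ≤ p.1 ∧ 0 ≤ p.2 ∧ p.1 + p.2 ≤ 1 ∧ p.1 ≤ (μ - 1) / 2 ∧ p.2 ≤ (μ - 1) / 2}

/-- The interface entropy per step `κ̂(μ) = (1/μ) · sup_{(δ,ε) ∈ D_μ} f_μ(δ,ε)`. -/
noncomputable def kappaHat (μ : ℝ) : ℝ := (1 / μ) * sSup (fmu μ '' Dmu μ)

/-- The closed form of the supremum: with `t = μ - 1` and `r = √(t² + 1)`,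
`sup f_μ = log (t + r) + t (log (r + 1) - log t)`. -/
noncomputable def Gfun (μ : ℝ) : ℝ :=
  Real.log ((μ - 1) + Real.sqrt ((μ - 1) ^ 2 + 1)) +
    (μ - 1) * (Real.log (Real.sqrt ((μ - 1) ^ 2 + 1) + 1) - Real.log (μ - 1))

lemma neg_mul_log_le {x q : ℝ} (hx : 0 ≤ x) (hq : 0 < q) :
    -(x * Real.log x) ≤ q - x - x * Real.log q := by
  rcases eq_or_lt_of_le hx with h | h
  · simp [← h]; positivity
  · have h1 : Real.log (q / x) ≤ q / x - 1 := Real.log_le_sub_one_of_pos (by positivity)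
    rw [Real.log_div hq.ne' h.ne'] at h1
    have h2 := mul_le_mul_of_nonneg_left h1 h.le
    have h3 : x * (q / x - 1) = q - x := by field_simp
    nlinarith

lemma isGreatest_fmu {μ : ℝ} (hμ : 1 < μ) : IsGreatest (fmu μ '' Dmu μ) (Gfun μ) := by
  have ht : 0 < μ - 1 := by linarith
  set t : ℝ := μ - 1 with htdef
  set r : ℝ := Real.sqrt (t ^ 2 + 1) with hrdef
  have hr2 : r ^ 2 = t ^ 2 + 1 := Real.sq_sqrt (by positivity)
  have hr0 : 0 < r := Real.sqrt_pos.2 (by positivity)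
  have hrt : t < r := by nlinarith
  have hr1 : 1 < r := by nlinarith
  have hrlt : r < t + 1 := by nlinarith
  -- the three log identities
  have hδpos : 0 < (t + 1 - r) / 2 := by linarith
  have hL2pos : 0 < r - t := by linarith
  have hL3pos : 0 < (r - 1) / 2 := by linarith
  have h1 : 2 * Real.log ((t + 1 - r) / 2) = Real.log (r - t) + Real.log ((r - 1) / 2) := by
    have hsq : ((t + 1 - r) / 2) ^ 2 = (r - t) * ((r - 1) / 2) := by linear_combination (-1/4 : ℝ) * hr2
    have := Real.log_pow ((t + 1 - r) / 2) 2
    rw [hsq, Real.log_mul hL2pos.ne' hL3pos.ne'] at this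
    push_cast at this
    linarith
  have h2 : Real.log (r - t) = -Real.log (t + r) := by
    have hprod : (r - t) * (t + r) = 1 := by linear_combination hr2
    have := Real.log_mul hL2pos.ne' (by positivity : (0:ℝ) < t + r).ne'
    rw [hprod, Real.log_one] at this
    linarith
  have hμt : μ = t + 1 := by linarith [htdef]
  have h3 : Real.log (t / 2) - Real.log ((r - 1) / 2) = Real.log (r + 1) - Real.log t := by
    have e1 : Real.log (t / 2) = Real.log t - Real.log 2 :=
      Real.log_div ht.ne' two_ne_zero
    have e2 : Real.log ((r - 1) / 2) = Real.log (r - 1) - Real.log 2 :=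
      Real.log_div (by linarith) two_ne_zero
    have e3 : Real.log (r - 1) + Real.log (r + 1) = 2 * Real.log t := by
      have hprod : (r - 1) * (r + 1) = t ^ 2 := by linear_combination hr2
      have h4 := Real.log_mul (by intro h; nlinarith [h] : (r:ℝ) - 1 ≠ 0) (by positivity : (0:ℝ) < r + 1).ne'
      have h5 := Real.log_pow t 2
      rw [hprod] at h4
      push_cast at h5
      linarith
    linarith
  constructor
  · -- the maximum is attained at ((t+1-r)/2, (t+1-r)/2)
    refine ⟨((t + 1 - r) / 2, (t + 1 - r) / 2), ⟨hδpos.le, hδpos.le, by linarith, ?_, ?_⟩, ?_⟩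
    · show (t + 1 - r) / 2 ≤ (μ - 1) / 2
      rw [hμt]; linarith
    · show (t + 1 - r) / 2 ≤ (μ - 1) / 2
      rw [hμt]; linarith
    · show fmu μ ((t + 1 - r) / 2, (t + 1 - r) / 2) = Gfun μ
      rw [fmu, Gfun, hμt]
      have e0 : (t + 1 - 1 : ℝ) = t := by ring
      rw [e0, ← hrdef]
      rw [show (1 : ℝ) - ((t + 1 - r) / 2, (t + 1 - r) / 2).1 - ((t + 1 - r) / 2, (t + 1 - r) / 2).2
            = r - t from by simp; ring]
      rw [show (t / 2 - ((t + 1 - r) / 2, (t + 1 - r) / 2).1 : ℝ) = (r - 1) / 2 from by simp; ring]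
      simp only
      linear_combination (-(t + 1 - r)) * h1 - h2 + t * h3
  · -- upper bound
    rintro y ⟨p, hp, rfl⟩
    obtain ⟨hp1, hp2, hp12, hp1s, hp2s⟩ := hp
    rw [hμt] at hp1s hp2s
    have e0 : (t + 1 - 1 : ℝ) / 2 = t / 2 := by ring
    rw [e0] at hp1s hp2s
    -- the five per-coordinate bounds
    have A1 := neg_mul_log_le hp1 hδpos
    have A2 := neg_mul_log_le hp2 hδpos
    have A3 := neg_mul_log_le (by linarith : (0:ℝ) ≤ 1 - p.1 - p.2) hL2pos
    have A4 := neg_mul_log_le (by linarith : (0:ℝ) ≤ t / 2 - p.1) hL3pos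
    have A5 := neg_mul_log_le (by linarith : (0:ℝ) ≤ t / 2 - p.2) hL3pos
    rw [fmu, Gfun, hμt]
    rw [show (t + 1 - 1 : ℝ) = t from by ring, ← hrdef]
    have key : Real.log (t + r) + t * (Real.log (r + 1) - Real.log t)
        = -2 * p.1 * Real.log ((t + 1 - r) / 2) - 2 * p.2 * Real.log ((t + 1 - r) / 2)
          - (1 - p.1 - p.2) * Real.log (r - t)
          - (t / 2 - p.1) * Real.log ((r - 1) / 2)
          - (t / 2 - p.2) * Real.log ((r - 1) / 2)
          + t * Real.log (t / 2) := by
      linear_combination (p.1 + p.2) * h1 + h2 - t * h3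
    rw [key]
    linarith [A1, A2, A3, A4, A5]

lemma sqrt_facts {t : ℝ} (ht : 0 < t) :
    (Real.sqrt (t ^ 2 + 1)) ^ 2 = t ^ 2 + 1 ∧ 0 < Real.sqrt (t ^ 2 + 1) ∧
      t < Real.sqrt (t ^ 2 + 1) ∧ 1 < Real.sqrt (t ^ 2 + 1) := by
  have h2 : (Real.sqrt (t ^ 2 + 1)) ^ 2 = t ^ 2 + 1 := Real.sq_sqrt (by positivity)
  have h0 : 0 < Real.sqrt (t ^ 2 + 1) := Real.sqrt_pos.2 (by positivity)
  exact ⟨h2, h0, by nlinarith, by nlinarith⟩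

lemma hasDerivAt_sqrt_aux {x : ℝ} (hx : 1 < x) :
    HasDerivAt (fun y : ℝ => Real.sqrt ((y - 1) ^ 2 + 1))
      ((x - 1) / Real.sqrt ((x - 1) ^ 2 + 1)) x := by
  have ht : 0 < x - 1 := by linarith
  obtain ⟨h2, h0, h3, h4⟩ := sqrt_facts ht
  have hinner : HasDerivAt (fun y : ℝ => (y - 1) ^ 2 + 1) (2 * (x - 1)) x := by
    simpa using ((hasDerivAt_id' (x := x)).sub_const 1).pow 2 |>.add_const 1
  have := hinner.sqrt (by positivity)
  convert this using 1
  rw [div_eq_div_iff h0.ne' (by positivity)]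
  ring

lemma aux_zero {t r : ℝ} (ht : 0 < t) (h0 : 0 < r) (h2 : r ^ 2 = t ^ 2 + 1) :
    (1 + t / r) / (t + r) + t * (t / r / (r + 1) - 1 / t) = 0 := by
  have h1 : (0:ℝ) < r + 1 := by linarith
  have htr : (0:ℝ) < t + r := by linarith
  field_simp
  linear_combination (-(r * t * (t + r)) + t * r ^ 2 + (t ^ 2 - 1) * r - t) * h2

lemma aux_two {t r : ℝ} (ht : 0 < t) (h0 : 0 < r) (h2 : r ^ 2 = t ^ 2 + 1) :
    -(1 / (t * r)) = t / r / (r + 1) - 1 / t := by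
  have h1 : (0:ℝ) < r + 1 := by linarith
  field_simp
  linear_combination h2

lemma hasDerivAt_Gfun {x : ℝ} (hx : 1 < x) :
    HasDerivAt Gfun
      (Real.log (Real.sqrt ((x - 1) ^ 2 + 1) + 1) - Real.log (x - 1)) x := by
  have ht : 0 < x - 1 := by linarith
  obtain ⟨h2, h0, h3, h4⟩ := sqrt_facts ht
  have hsq := hasDerivAt_sqrt_aux hx
  have hA : HasDerivAt (fun y : ℝ => (y - 1) + Real.sqrt ((y - 1) ^ 2 + 1))
      (1 + (x - 1) / Real.sqrt ((x - 1) ^ 2 + 1)) x :=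
    ((hasDerivAt_id' (x := x)).sub_const 1).add hsq
  have hlogA := hA.log (by positivity)
  have hB : HasDerivAt (fun y : ℝ => Real.sqrt ((y - 1) ^ 2 + 1) + 1)
      ((x - 1) / Real.sqrt ((x - 1) ^ 2 + 1)) x := hsq.add_const 1
  have hlogB := hB.log (by positivity)
  have hlogC : HasDerivAt (fun y : ℝ => Real.log (y - 1)) (1 / (x - 1)) x := by
    simpa using ((hasDerivAt_id' (x := x)).sub_const 1).log ht.ne'
  have hmul := ((hasDerivAt_id' (x := x)).sub_const 1).mul (hlogB.sub hlogC)
  have hG : HasDerivAt Gfun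
      ((1 + (x - 1) / Real.sqrt ((x - 1) ^ 2 + 1)) / (x - 1 + Real.sqrt ((x - 1) ^ 2 + 1)) +
        (1 * (Real.log (Real.sqrt ((x - 1) ^ 2 + 1) + 1) - Real.log (x - 1)) +
          (x - 1) * ((x - 1) / Real.sqrt ((x - 1) ^ 2 + 1) / (Real.sqrt ((x - 1) ^ 2 + 1) + 1)
            - 1 / (x - 1)))) x := hlogA.add hmul
  convert hG using 1
  have hz := aux_zero ht h0 h2
  linear_combination -hz

lemma hasDerivAt_G' {x : ℝ} (hx : 1 < x) :
    HasDerivAt (fun y : ℝ => Real.log (Real.sqrt ((y - 1) ^ 2 + 1) + 1) - Real.log (y - 1))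
      (-(1 / ((x - 1) * Real.sqrt ((x - 1) ^ 2 + 1)))) x := by
  have ht : 0 < x - 1 := by linarith
  obtain ⟨h2, h0, h3, h4⟩ := sqrt_facts ht
  have hsq := hasDerivAt_sqrt_aux hx
  have hB : HasDerivAt (fun y : ℝ => Real.sqrt ((y - 1) ^ 2 + 1) + 1)
      ((x - 1) / Real.sqrt ((x - 1) ^ 2 + 1)) x := hsq.add_const 1
  have hlogB := hB.log (by positivity)
  have hlogC : HasDerivAt (fun y : ℝ => Real.log (y - 1)) (1 / (x - 1)) x := by
    simpa using ((hasDerivAt_id' (x := x)).sub_const 1).log ht.ne'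
  rw [aux_two ht h0 h2]
  exact hlogB.sub hlogC

lemma arg_pos (u : ℝ) : 0 < u + Real.sqrt (u ^ 2 + 1) := by
  have h2 : (Real.sqrt (u ^ 2 + 1)) ^ 2 = u ^ 2 + 1 := Real.sq_sqrt (by positivity)
  have h0 : 0 ≤ Real.sqrt (u ^ 2 + 1) := Real.sqrt_nonneg _
  nlinarith

lemma continuous_Gfun : Continuous Gfun := by
  have hrw : Gfun = fun μ : ℝ =>
      Real.log ((μ - 1) + Real.sqrt ((μ - 1) ^ 2 + 1)) +
        (μ - 1) * Real.log (Real.sqrt ((μ - 1) ^ 2 + 1) + 1) -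
        (μ - 1) * Real.log (μ - 1) := by
    funext μ; rw [Gfun]; ring
  rw [hrw]
  have csqrt : Continuous fun μ : ℝ => Real.sqrt ((μ - 1) ^ 2 + 1) :=
    Real.continuous_sqrt.comp (by continuity)
  have c1 : Continuous fun μ : ℝ => Real.log ((μ - 1) + Real.sqrt ((μ - 1) ^ 2 + 1)) := by
    apply Continuous.log ((by continuity : Continuous fun μ : ℝ => (μ - 1)).add csqrt)
    intro μ
    exact (arg_pos (μ - 1)).ne'
  have c2 : Continuous fun μ : ℝ => (μ - 1) * Real.log (Real.sqrt ((μ - 1) ^ 2 + 1) + 1) := by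
    apply Continuous.mul (by continuity)
    apply Continuous.log (by continuity)
    intro μ
    have := Real.sqrt_nonneg ((μ - 1) ^ 2 + 1)
    positivity
  have c3 : Continuous fun μ : ℝ => (μ - 1) * Real.log (μ - 1) := by
    exact Real.continuous_mul_log.comp (continuous_sub_right (1:ℝ))
  exact (c1.add c2).sub c3

lemma analyticAt_Gfun {x : ℝ} (hx : 1 < x) : AnalyticAt ℝ Gfun x := by
  have ht : 0 < x - 1 := by linarith
  have hs0 : 0 < Real.sqrt ((x - 1) ^ 2 + 1) := Real.sqrt_pos.2 (by positivity)
  have h1 : ContDiffAt ℝ ω (fun μ : ℝ => (μ - 1) ^ 2 + 1) x :=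
    (((contDiffAt_id.sub contDiffAt_const).pow 2).add contDiffAt_const)
  have hs : ContDiffAt ℝ ω (fun μ : ℝ => Real.sqrt ((μ - 1) ^ 2 + 1)) x :=
    h1.sqrt (by positivity)
  have hA : ContDiffAt ℝ ω (fun μ : ℝ => Real.log ((μ - 1) + Real.sqrt ((μ - 1) ^ 2 + 1))) x :=
    ((contDiffAt_id.sub contDiffAt_const).add hs).log (arg_pos (x - 1)).ne'
  have hB : ContDiffAt ℝ ω (fun μ : ℝ => Real.log (Real.sqrt ((μ - 1) ^ 2 + 1) + 1)) x :=
    (hs.add contDiffAt_const).log (by positivity)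
  have hC : ContDiffAt ℝ ω (fun μ : ℝ => Real.log (μ - 1)) x :=
    (contDiffAt_id.sub contDiffAt_const).log ht.ne'
  have : ContDiffAt ℝ ω Gfun x :=
    hA.add ((contDiffAt_id.sub contDiffAt_const).mul (hB.sub hC))
  exact this.analyticAt

lemma strictConcave_Gfun : StrictConcaveOn ℝ (Set.Ici 1) Gfun := by
  apply strictConcaveOn_of_deriv2_neg (convex_Ici 1) continuous_Gfun.continuousOn
  intro x hx
  rw [interior_Ici] at hx
  have ht : 0 < x - 1 := by linarith [Set.mem_Ioi.1 hx]
  have hs0 : 0 < Real.sqrt ((x - 1) ^ 2 + 1) := Real.sqrt_pos.2 (by positivity)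
  have hx1 : (1:ℝ) < x := hx
  have hev : deriv Gfun =ᶠ[nhds x]
      (fun y : ℝ => Real.log (Real.sqrt ((y - 1) ^ 2 + 1) + 1) - Real.log (y - 1)) := by
    filter_upwards [isOpen_Ioi.mem_nhds hx] with y hy
    exact (hasDerivAt_Gfun hy).deriv
  have h1 : deriv (deriv Gfun) x = -(1 / ((x - 1) * Real.sqrt ((x - 1) ^ 2 + 1))) := by
    rw [hev.deriv_eq]
    exact (hasDerivAt_G' hx1).deriv
  show deriv (deriv Gfun) x < 0
  rw [h1]
  have : 0 < (x - 1) * Real.sqrt ((x - 1) ^ 2 + 1) := by positivity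
  have : 0 < 1 / ((x - 1) * Real.sqrt ((x - 1) ^ 2 + 1)) := by positivity
  linarith

lemma sSup_fmu {μ : ℝ} (hμ : 1 ≤ μ) : sSup (fmu μ '' Dmu μ) = Gfun μ := by
  rcases eq_or_lt_of_le hμ with h | h
  · subst h
    have hD : Dmu 1 = {((0 : ℝ), (0 : ℝ))} := by
      ext p
      simp only [Dmu, Set.mem_setOf_eq, Set.mem_singleton_iff, Prod.ext_iff]
      constructor
      · rintro ⟨h1, h2, _, h4, h5⟩
        norm_num at h4 h5
        exact ⟨le_antisymm h4 h1, le_antisymm h5 h2⟩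
      · rintro ⟨h1, h2⟩
        simp [h1, h2]
    rw [hD]
    simp [fmu, Gfun]
  · exact (isGreatest_fmu h).csSup_eq

lemma mul_kappaHat {μ : ℝ} (hμ : 1 ≤ μ) : μ * kappaHat μ = Gfun μ := by
  have h0 : μ ≠ 0 := by linarith
  rw [kappaHat, sSup_fmu hμ]
  field_simp

/-- `μ ↦ μ·κ̂(μ)` is continuous and strictly concave on `[1,∞)`, and
real-analytic on `(1,∞)`. -/
theorem stmt8 :
    ContinuousOn (fun μ : ℝ => μ * kappaHat μ) (Set.Ici 1) ∧
    StrictConcaveOn ℝ (Set.Ici (1 : ℝ)) (fun μ : ℝ => μ * kappaHat μ) ∧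
    AnalyticOnNhd ℝ (fun μ : ℝ => μ * kappaHat μ) (Set.Ioi 1) := by
  have heq : ∀ μ ∈ Set.Ici (1:ℝ), μ * kappaHat μ = Gfun μ := fun μ hμ => mul_kappaHat hμ
  refine ⟨?_, ?_, ?_⟩
  · exact continuous_Gfun.continuousOn.congr heq
  · refine ⟨convex_Ici 1, ?_⟩
    intro x hx y hy hxy a b ha hb hab
    have hc : a • x + b • y ∈ Set.Ici (1:ℝ) := (convex_Ici 1) hx hy ha.le hb.le hab
    show a • (x * kappaHat x) + b • (y * kappaHat y) <
      (a • x + b • y) * kappaHat (a • x + b • y)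
    rw [heq x hx, heq y hy, show (a • x + b • y) * kappaHat (a • x + b • y) = Gfun (a • x + b • y)
      from heq _ hc]
    exact strictConcave_Gfun.2 hx hy hxy ha hb hab
  · intro x hx
    refine (analyticAt_Gfun hx).congr ?_
    filter_upwards [isOpen_Ioi.mem_nhds hx] with y hy
    exact (heq y (Set.mem_Ici.2 (le_of_lt hy))).symm
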